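/- Let Γ be a group acting on a group P, let U be a Γ-stable normal subgroup of P with quotient L = P/U, and suppose the projection P → L admits a Γ-equivariant group-theoretic section. If the pointed set H¹(Γ, U_c) is trivial for every twist U_c of U by a cocycle valued in P, then the induced map of pointed sets H¹(Γ, P) → H¹(Γ, L) is a bijection. -/
import Mathlib


variable (Γ : Type*) [Group Γ]

/-- A (nonabelian) 1-cocycle of `Γ` valued in the `Γ`-group `P`. -/
def IsCocycle {P : Type*} [Group P] [MulDistribMulAction Γ P] (c : Γ → P) : Prop :=
  ∀ σ τ : Γ, c (σ * τ) = c σ * σ • c τ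

/-- Two 1-cocycles are cohomologous if they differ by a coboundary. -/
def Cohomologous {P : Type*} [Group P] [MulDistribMulAction Γ P] (c c' : Γ → P) : Prop :=
  ∃ g : P, ∀ σ : Γ, c' σ = g⁻¹ * c σ * σ • g

/-- Let `Γ` act on a group `P`, let `U = ker π` be a `Γ`-stable
normal subgroup with quotient `L` (the projection `π : P → L` being
`Γ`-equivariant and surjective), and suppose `π` admits a `Γ`-equivariant
group-theoretic section `s`. If for every `P`-valued cocycle `c` the pointed
set `H¹(Γ, U_c)` of the twist `U_c` of `U` by `c` is trivial, then the induced
map of pointed sets `H¹(Γ, P) → H¹(Γ, L)` is a bijection: every class in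
`H¹(Γ, L)` lifts to `H¹(Γ, P)`, and two `P`-valued cocycles with cohomologous
images in `L` are already cohomologous in `P`. -/
theorem stmt_0 {P L : Type*} [Group P] [Group L]
    [MulDistribMulAction Γ P] [MulDistribMulAction Γ L]
    (π : P →* L) (hπsurj : Function.Surjective π)
    (hπequiv : ∀ (σ : Γ) (p : P), π (σ • p) = σ • π p)
    (s : L →* P) (hsec : ∀ l : L, π (s l) = l)
    (hsequiv : ∀ (σ : Γ) (l : L), s (σ • l) = σ • s l)
    (hU : ∀ c : Γ → P, IsCocycle Γ c →
      ∀ u : Γ → P, (∀ σ, u σ ∈ π.ker) →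
      (∀ σ τ : Γ, u (σ * τ) = u σ * (c σ * (σ • u τ) * (c σ)⁻¹)) →
      ∃ v ∈ π.ker, ∀ σ, u σ = v⁻¹ * (c σ * (σ • v) * (c σ)⁻¹)) :
    (∀ d : Γ → L, IsCocycle Γ d →
      ∃ c : Γ → P, IsCocycle Γ c ∧ Cohomologous Γ (fun σ => π (c σ)) d) ∧
    (∀ c c' : Γ → P, IsCocycle Γ c → IsCocycle Γ c' →
      Cohomologous Γ (fun σ => π (c σ)) (fun σ => π (c' σ)) →
      Cohomologous Γ c c') := by

  constructor
  · intro d hd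
    refine ⟨fun σ => s (d σ), ?_, 1, fun σ => ?_⟩
    · intro σ τ
      show s (d (σ * τ)) = s (d σ) * σ • s (d τ)
      rw [hd σ τ, map_mul, hsequiv]
    · simp [hsec]
  · intro c c' hc hc' ⟨h, hh⟩
    -- modify c' to c'' with same image as c
    set g : P := s h with hg
    have hπg : π g = h := hsec h
    set c'' : Γ → P := fun σ => g * c' σ * (σ • g)⁻¹ with hc''def
    have hc''coc : IsCocycle Γ c'' := by
      intro σ τ
      simp only [hc''def, hc' σ τ, mul_smul, smul_mul', smul_inv']
      group
    have hπc'' : ∀ σ, π (c'' σ) = π (c σ) := by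
      intro σ
      have := hh σ
      simp only [hc''def, map_mul, map_inv, hπequiv, hπg, this]
      group
    set u : Γ → P := fun σ => c'' σ * (c σ)⁻¹ with hu
    have huker : ∀ σ, u σ ∈ π.ker := by
      intro σ
      simp [MonoidHom.mem_ker, hu, hπc'' σ]
    have hucoc : ∀ σ τ : Γ, u (σ * τ) = u σ * (c σ * (σ • u τ) * (c σ)⁻¹) := by
      intro σ τ
      simp only [hu, hc''coc σ τ, hc σ τ, mul_inv_rev, smul_mul', smul_inv']
      group
    obtain ⟨v, hv, hvu⟩ := hU c hc u huker hucoc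
    refine ⟨v * g, fun σ => ?_⟩
    have h1 : c'' σ = v⁻¹ * (c σ * σ • v) := by
      have := hvu σ
      simp only [hu] at this
      have h0 : c'' σ = (c'' σ * (c σ)⁻¹) * c σ := by group
      rw [h0, this]; group
    have h2 : c' σ = g⁻¹ * c'' σ * σ • g := by
      simp only [hc''def]; group
    rw [h2, h1]
    simp only [mul_inv_rev, smul_mul']
    group
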